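/- arXiv:1510.03106 — 4 statements merged into one kernel-verified Lean document; each statement's English description precedes it below -/
import Mathlib

section
/- Let D, E, F be Young diagrams with |F| > (r_1(D) − 1)(c_1(E) − 1) and F ≥ (D)_r ∪ (E)_c. Then F ≥ D or F ≥ E. -/
/-- `Dr` is obtained from `D` by shortening the first row to `max (r₂ D) 1`. -/
def IsShortRow (D Dr : YoungDiagram) : Prop :=
  Dr.rowLen 0 = max (D.rowLen 1) 1 ∧ ∀ i : ℕ, 0 < i → Dr.rowLen i = D.rowLen i

/-- `Ec` is obtained from `E` by shortening the first column to `max (c₂ E) 1`. -/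
def IsShortCol (E Ec : YoungDiagram) : Prop :=
  Ec.colLen 0 = max (E.colLen 1) 1 ∧ ∀ i : ℕ, 0 < i → Ec.colLen i = E.colLen i

/-- If `|F| > (r₁(D) - 1)(c₁(E) - 1)` and `F ≥ (D)_r ⊔ (E)_c`, then `F ≥ D` or `F ≥ E`. -/
theorem youngDiagram_ge_of_card_gt (D E F Dr Ec : YoungDiagram)
    (hD : D ≠ ⊥) (hE : E ≠ ⊥)
    (hDr : IsShortRow D Dr) (hEc : IsShortCol E Ec)
    (hcard : (D.rowLen 0 - 1) * (E.colLen 0 - 1) < F.card)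
    (hle : Dr ⊔ Ec ≤ F) :
    D ≤ F ∨ E ≤ F := by
  have hDrF : Dr ≤ F := le_sup_left.trans hle
  have hEcF : Ec ≤ F := le_sup_right.trans hle
  by_cases h1 : D.rowLen 0 ≤ F.rowLen 0
  · left
    intro x hx
    obtain ⟨i, j⟩ := x
    rw [YoungDiagram.mem_iff_lt_rowLen] at hx
    rcases Nat.eq_zero_or_pos i with hi | hi
    · subst hi
      rw [YoungDiagram.mem_iff_lt_rowLen]
      exact lt_of_lt_of_le hx h1
    · have : (i, j) ∈ Dr := by
        rw [YoungDiagram.mem_iff_lt_rowLen, hDr.2 i hi]; exact hx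
      exact hDrF this
  by_cases h2 : E.colLen 0 ≤ F.colLen 0
  · right
    intro x hx
    obtain ⟨i, j⟩ := x
    rw [YoungDiagram.mem_iff_lt_colLen] at hx
    rcases Nat.eq_zero_or_pos j with hj | hj
    · subst hj
      rw [YoungDiagram.mem_iff_lt_colLen]
      exact lt_of_lt_of_le hx h2
    · have : (i, j) ∈ Ec := by
        rw [YoungDiagram.mem_iff_lt_colLen, hEc.2 j hj]; exact hx
      exact hEcF this
  exfalso
  have hsub : F.cells ⊆ Finset.range (F.colLen 0) ×ˢ Finset.range (F.rowLen 0) := by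
    intro x hx
    obtain ⟨i, j⟩ := x
    rw [YoungDiagram.mem_cells] at hx
    rw [Finset.mem_product, Finset.mem_range, Finset.mem_range]
    exact ⟨lt_of_lt_of_le (YoungDiagram.mem_iff_lt_colLen.1 hx)
        (F.colLen_anti 0 j (Nat.zero_le j)),
      lt_of_lt_of_le (YoungDiagram.mem_iff_lt_rowLen.1 hx)
        (F.rowLen_anti 0 i (Nat.zero_le i))⟩
  have hcard' : F.card ≤ F.colLen 0 * F.rowLen 0 := by
    have := Finset.card_le_card hsub
    simpa [Finset.card_product] using this
  have h1' : F.rowLen 0 ≤ D.rowLen 0 - 1 := by omega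
  have h2' : F.colLen 0 ≤ E.colLen 0 - 1 := by omega
  have : F.card ≤ (E.colLen 0 - 1) * (D.rowLen 0 - 1) :=
    hcard'.trans (Nat.mul_le_mul h2' h1')
  rw [Nat.mul_comm] at this
  omega
end

section
/- Let S be a finite set of Young diagrams and F a Young diagram. Suppose there exists n such that every Young diagram G with |G| > n and G > F lies in the upward closure of S (i.e., G ≥ D for some D ∈ S). Then F ≥ (D)_r ∪ (E)_c for some D, E ∈ S. -/
namespace YoungShortAux

open YoungDiagram Finset

lemma rowLen_eq_of {μ : YoungDiagram} {i t : ℕ} (h : ∀ j, (i, j) ∈ μ ↔ j < t) :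
    μ.rowLen i = t := by
  rcases Nat.lt_trichotomy (μ.rowLen i) t with hl | he | hg
  · have := (h (μ.rowLen i)).mpr hl
    rw [YoungDiagram.mem_iff_lt_rowLen] at this
    omega
  · exact he
  · have := (h t).mp (YoungDiagram.mem_iff_lt_rowLen.mpr hg)
    omega

/-- `D` with first row shortened to `max (D.rowLen 1) 1`. -/
def shortRow (D : YoungDiagram) : YoungDiagram where
  cells := (D.cells.filter (fun c => 1 ≤ c.1)) ∪
    (Finset.range (max (D.rowLen 1) 1)).image (fun j => (0, j))
  isLowerSet := by
    rintro ⟨i2, j2⟩ ⟨i1, j1⟩ ⟨hi, hj⟩ hm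
    simp only [Finset.coe_union, Finset.coe_filter, Set.mem_union, Set.mem_setOf_eq,
      Finset.coe_image, Set.mem_image, Finset.mem_coe, Finset.mem_range] at hm ⊢
    simp only [YoungDiagram.mem_cells] at *
    rcases hm with ⟨hm, hi2⟩ | ⟨j, hj2, hj3⟩
    · rcases Nat.eq_zero_or_pos i1 with h0 | h0
      · right
        refine ⟨j1, ?_, by rw [h0]⟩
        have h1 : j2 < D.rowLen i2 := YoungDiagram.mem_iff_lt_rowLen.mp hm
        have h2 : D.rowLen i2 ≤ D.rowLen 1 := D.rowLen_anti 1 i2 hi2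
        omega
      · left
        exact ⟨D.up_left_mem hi hj hm, h0⟩
    · right
      cases hj3
      have : i1 = 0 := by omega
      exact ⟨j1, by omega, by rw [this]⟩

lemma mem_shortRow {D : YoungDiagram} {i j : ℕ} :
    (i, j) ∈ shortRow D ↔ (1 ≤ i ∧ (i, j) ∈ D) ∨ (i = 0 ∧ j < max (D.rowLen 1) 1) := by
  rw [← YoungDiagram.mem_cells]
  simp only [shortRow, YoungDiagram.mem_mk, Finset.mem_union, Finset.mem_filter,
    Finset.mem_image, Finset.mem_range, YoungDiagram.mem_cells]
  constructor
  · rintro (⟨h1, h2⟩ | ⟨a, ha, hb⟩)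
    · exact Or.inl ⟨h2, h1⟩
    · cases hb; exact Or.inr ⟨rfl, ha⟩
  · rintro (⟨h1, h2⟩ | ⟨h1, h2⟩)
    · exact Or.inl ⟨h2, h1⟩
    · exact Or.inr ⟨j, h2, by rw [h1]⟩

lemma isShortRow_shortRow (D : YoungDiagram) : IsShortRow D (shortRow D) := by
  constructor
  · apply rowLen_eq_of
    intro j
    rw [mem_shortRow]
    omega
  · intro i hi
    apply rowLen_eq_of
    intro j
    rw [mem_shortRow, YoungDiagram.mem_iff_lt_rowLen (μ := D)]
    omega

lemma rowLen0_pos {F : YoungDiagram} (hF : F ≠ ⊥) : 1 ≤ F.rowLen 0 := by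
  have hne : F.cells.Nonempty := by
    rw [Finset.nonempty_iff_ne_empty]
    intro he
    exact hF (by ext c; simp [he])
  obtain ⟨⟨a, b⟩, hc⟩ := hne
  have : (0, 0) ∈ F := F.up_left_mem (Nat.zero_le _) (Nat.zero_le _) hc
  rw [YoungDiagram.mem_iff_lt_rowLen] at this
  omega

/-- The diagram `F` with first row extended to length `max N (F.rowLen 0)`-ish:
cells of `F` together with the row `{0} × range N`. -/
def extendRow (F : YoungDiagram) (N : ℕ) : YoungDiagram where
  cells := F.cells ∪ (Finset.range N).image (fun j => (0, j))
  isLowerSet := by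
    rintro ⟨i2, j2⟩ ⟨i1, j1⟩ ⟨hi, hj⟩ hm
    simp only [Finset.coe_union, Set.mem_union, Finset.coe_image, Set.mem_image,
      Finset.mem_coe, Finset.mem_range, YoungDiagram.mem_cells] at hm ⊢
    rcases hm with hm | ⟨a, ha, hb⟩
    · exact Or.inl (F.up_left_mem hi hj hm)
    · cases hb
      have : i1 = 0 := by omega
      exact Or.inr ⟨j1, by omega, by rw [this]⟩

lemma mem_extendRow {F : YoungDiagram} {N i j : ℕ} :
    (i, j) ∈ extendRow F N ↔ (i, j) ∈ F ∨ (i = 0 ∧ j < N) := by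
  rw [← YoungDiagram.mem_cells]
  simp only [extendRow, YoungDiagram.mem_mk, Finset.mem_union, Finset.mem_image,
    Finset.mem_range, YoungDiagram.mem_cells]
  constructor
  · rintro (hm | ⟨a, ha, hb⟩)
    · exact Or.inl hm
    · cases hb; exact Or.inr ⟨rfl, ha⟩
  · rintro (hm | ⟨h1, h2⟩)
    · exact Or.inl hm
    · exact Or.inr ⟨j, h2, by rw [h1]⟩

lemma card_extendRow_ge {F : YoungDiagram} {N : ℕ} : N ≤ (extendRow F N).card := by
  have h1 : ((Finset.range N).image (fun j => (0, j))).card = N := by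
    rw [Finset.card_image_of_injective]
    · exact Finset.card_range N
    · intro a b hab
      simpa using hab
  calc N = ((Finset.range N).image (fun j => (0, j))).card := h1.symm
    _ ≤ (extendRow F N).card := Finset.card_le_card Finset.subset_union_right

lemma le_extendRow {F : YoungDiagram} {N : ℕ} : F ≤ extendRow F N := by
  intro c hc
  rcases c with ⟨i, j⟩
  exact mem_extendRow.mpr (Or.inl hc)

lemma lt_extendRow {F : YoungDiagram} {N : ℕ} (hN : F.rowLen 0 < N) :
    F < extendRow F N := by
  refine lt_of_le_of_ne le_extendRow (fun he => ?_)
  have h1 : ((0 : ℕ), F.rowLen 0) ∈ extendRow F N := mem_extendRow.mpr (Or.inr ⟨rfl, hN⟩)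
  rw [← he, YoungDiagram.mem_iff_lt_rowLen] at h1
  omega

/-- Key lemma: under the hypothesis there is `D ∈ S` and a short-row `Dr` with `Dr ≤ F`. -/
lemma exists_shortRow_le (S : Finset YoungDiagram) (F : YoungDiagram) (hF : F ≠ ⊥)
    (h : ∃ n : ℕ, ∀ G : YoungDiagram, n < G.card → F < G → ∃ D ∈ S, D ≤ G) :
    ∃ D ∈ S, ∃ Dr : YoungDiagram, IsShortRow D Dr ∧ Dr ≤ F := by
  obtain ⟨n, hn⟩ := h
  set N := max (n + 1) (F.rowLen 0 + 1) with hN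
  obtain ⟨D, hD, hDG⟩ := hn (extendRow F N)
    (lt_of_lt_of_le (by omega) card_extendRow_ge)
    (lt_extendRow (by omega))
  refine ⟨D, hD, shortRow D, isShortRow_shortRow D, ?_⟩
  have key : ∀ i j : ℕ, 1 ≤ i → (i, j) ∈ D → (i, j) ∈ F := by
    intro i j hi hm
    have := hDG hm
    rw [mem_extendRow] at this
    rcases this with hm' | ⟨h0, _⟩
    · exact hm'
    · omega
  intro c hc
  rcases c with ⟨i, j⟩
  rw [mem_shortRow] at hc
  rcases hc with ⟨hi, hm⟩ | ⟨hi, hj⟩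
  · exact key i j hi hm
  · subst hi
    rw [YoungDiagram.mem_iff_lt_rowLen]
    have h1 : D.rowLen 1 ≤ F.rowLen 1 := by
      rcases Nat.eq_zero_or_pos (D.rowLen 1) with h0 | h0
      · omega
      · have : (1, D.rowLen 1 - 1) ∈ D := YoungDiagram.mem_iff_lt_rowLen.mpr (by omega)
        have := key 1 _ le_rfl this
        rw [YoungDiagram.mem_iff_lt_rowLen] at this
        omega
    have h2 : F.rowLen 1 ≤ F.rowLen 0 := F.rowLen_anti 0 1 (by omega)
    have h3 := rowLen0_pos hF
    omega

lemma transpose_ne_bot {F : YoungDiagram} (hF : F ≠ ⊥) : F.transpose ≠ ⊥ := by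
  intro he
  apply hF
  rw [← YoungDiagram.transpose_transpose F, he]
  apply SetLike.coe_injective'
  ext ⟨i, j⟩
  simp [YoungDiagram.mem_transpose]

lemma card_transpose (F : YoungDiagram) : F.transpose.card = F.card := by
  classical
  have hc : F.transpose.cells = F.cells.image Prod.swap := by
    ext ⟨i, j⟩
    simp only [Finset.mem_image, YoungDiagram.mem_cells, YoungDiagram.mem_transpose,
      Prod.swap_prod_mk]
    constructor
    · intro h; exact ⟨(j, i), h, rfl⟩
    · rintro ⟨⟨a, b⟩, hm, he⟩
      simp only [Prod.swap_prod_mk, Prod.mk.injEq] at he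
      obtain ⟨rfl, rfl⟩ := he
      exact hm
  unfold YoungDiagram.card
  rw [hc, Finset.card_image_of_injective _ Prod.swap_injective]

end YoungShortAux

open YoungShortAux

/-- If for some `n` every diagram `G` with `|G| > n` and `G > F` lies in the upward
closure of the finite set `S`, then `F ≥ (D)_r ⊔ (E)_c` for some `D, E ∈ S`. -/
theorem youngDiagram_shortSup_le_of_eventually_ucl (S : Finset YoungDiagram)
    (hS : ∀ D ∈ S, D ≠ ⊥) (F : YoungDiagram) (hF : F ≠ ⊥)
    (h : ∃ n : ℕ, ∀ G : YoungDiagram, n < G.card → F < G → ∃ D ∈ S, D ≤ G) :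
    ∃ D ∈ S, ∃ E ∈ S, ∃ Dr Ec : YoungDiagram,
      IsShortRow D Dr ∧ IsShortCol E Ec ∧ Dr ⊔ Ec ≤ F := by
  classical
  obtain ⟨D, hD, Dr, hDr, hDrF⟩ := exists_shortRow_le S F hF h
  -- column part via transpose
  obtain ⟨n, hn⟩ := h
  have h' : ∃ n : ℕ, ∀ G : YoungDiagram, n < G.card → F.transpose < G →
      ∃ D ∈ S.image YoungDiagram.transpose, D ≤ G := by
    refine ⟨n, fun G hGc hGF => ?_⟩
    have h1 : F < G.transpose := by
      rw [← YoungDiagram.transpose_transpose F]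
      exact (OrderIso.lt_iff_lt YoungDiagram.transposeOrderIso).mpr hGF
    obtain ⟨E, hE, hEG⟩ := hn G.transpose (by rwa [card_transpose]) h1
    refine ⟨E.transpose, Finset.mem_image_of_mem _ hE, ?_⟩
    have h2 := YoungDiagram.transpose_mono hEG
    rwa [YoungDiagram.transpose_transpose] at h2
  obtain ⟨E', hE', Er, hEr, hErF⟩ :=
    exists_shortRow_le (S.image YoungDiagram.transpose) F.transpose (transpose_ne_bot hF) h'
  obtain ⟨E, hE, hEt⟩ := Finset.mem_image.mp hE'
  refine ⟨D, hD, E, hE, Dr, Er.transpose, hDr, ?_, ?_⟩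
  · subst hEt
    constructor
    · rw [YoungDiagram.colLen_transpose]
      rw [hEr.1, YoungDiagram.rowLen_transpose]
    · intro i hi
      rw [YoungDiagram.colLen_transpose, hEr.2 i hi, YoungDiagram.rowLen_transpose]
  · have h2 : Er.transpose ≤ F := by
      rw [← YoungDiagram.transpose_transpose F]
      exact YoungDiagram.transpose_mono hErF
    exact sup_le hDrF h2
end

section
/- For any finite set S of Young diagrams, let Ŝ = {(D)_r ∪ (E)_c : D, E ∈ S}. Then the upward closure ucl(Ŝ) is a closed set of diagrams: for every diagram F, F ∈ ucl(Ŝ) if and only if every diagram G > F belongs to ucl(Ŝ). -/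
/-- The upward closure of a set of Young diagrams. -/
def ucl (S : Set YoungDiagram) : Set YoungDiagram := {E | ∃ D ∈ S, D ≤ E}

/-- `Ŝ = {(D)_r ⊔ (E)_c : D, E ∈ S}`. -/
def shat (S : Finset YoungDiagram) : Set YoungDiagram :=
  {F | ∃ D ∈ S, ∃ E ∈ S, ∃ Dr Ec : YoungDiagram,
    IsShortRow D Dr ∧ IsShortCol E Ec ∧ F = Dr ⊔ Ec}

/-- A single-row diagram with `n` cells. -/
def rowDia (n : ℕ) : YoungDiagram :=
  ⟨({0} : Finset ℕ) ×ˢ Finset.range n, by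
    rintro ⟨i2, j2⟩ ⟨i1, j1⟩ ⟨hi : i1 ≤ i2, hj : j1 ≤ j2⟩ h
    simp only [Finset.coe_product, Set.mem_prod, Finset.coe_singleton, Set.mem_singleton_iff,
      Finset.coe_range, Set.mem_Iio] at h ⊢
    omega⟩

theorem mem_rowDia {n i j : ℕ} : (i, j) ∈ rowDia n ↔ i = 0 ∧ j < n := by
  simp [rowDia, YoungDiagram.mem_mk]
  omega

/-- A single-column diagram with `n` cells. -/
def colDia (n : ℕ) : YoungDiagram :=
  ⟨Finset.range n ×ˢ ({0} : Finset ℕ), by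
    rintro ⟨i2, j2⟩ ⟨i1, j1⟩ ⟨hi : i1 ≤ i2, hj : j1 ≤ j2⟩ h
    simp only [Finset.coe_product, Set.mem_prod, Finset.coe_singleton, Set.mem_singleton_iff,
      Finset.coe_range, Set.mem_Iio] at h ⊢
    omega⟩

theorem mem_colDia {n i j : ℕ} : (i, j) ∈ colDia n ↔ i < n ∧ j = 0 := by
  simp [colDia, YoungDiagram.mem_mk, Finset.mem_product, Finset.mem_range,
    Finset.mem_singleton, eq_comm]

theorem corner_mem (F : YoungDiagram) (hF : F ≠ ⊥) : (0, 0) ∈ F := by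
  by_contra h
  apply hF
  ext ⟨i, j⟩
  simp only [YoungDiagram.cells_bot, Finset.notMem_empty, iff_false]
  intro hij
  exact h (F.up_left_mem (Nat.zero_le _) (Nat.zero_le _) hij)

theorem shortRow_le {F D Dr : YoungDiagram} (hF : F ≠ ⊥) (hr : IsShortRow D Dr)
    (hle : Dr ≤ F ⊔ rowDia (F.rowLen 0 + 1)) : Dr ≤ F := by
  have hF0 : 1 ≤ F.rowLen 0 := by
    rw [Nat.succ_le_iff, ← YoungDiagram.mem_iff_lt_rowLen]; exact corner_mem F hF
  have key : ∀ i j : ℕ, 0 < i → (i, j) ∈ Dr → (i, j) ∈ F := by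
    intro i j hi hij
    have := hle hij
    rw [YoungDiagram.mem_sup, mem_rowDia] at this
    rcases this with h | h
    · exact h
    · omega
  have h1 : Dr.rowLen 1 ≤ F.rowLen 1 := by
    by_contra h
    push_neg at h
    have : (1, F.rowLen 1) ∈ Dr := YoungDiagram.mem_iff_lt_rowLen.mpr h
    have := key 1 _ one_pos this
    rw [YoungDiagram.mem_iff_lt_rowLen] at this
    omega
  rw [← YoungDiagram.cells_subset_iff]
  rintro ⟨i, j⟩ hij
  rw [YoungDiagram.mem_cells] at hij ⊢
  rcases Nat.eq_zero_or_pos i with rfl | hi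
  · rw [YoungDiagram.mem_iff_lt_rowLen] at hij ⊢
    have h0 := hr.1
    have h2 : D.rowLen 1 = Dr.rowLen 1 := (hr.2 1 one_pos).symm
    have h3 : F.rowLen 1 ≤ F.rowLen 0 := F.rowLen_anti 0 1 (Nat.zero_le 1)
    omega
  · exact key i j hi hij

theorem shortCol_le {F E Ec : YoungDiagram} (hF : F ≠ ⊥) (hc : IsShortCol E Ec)
    (hle : Ec ≤ F ⊔ colDia (F.colLen 0 + 1)) : Ec ≤ F := by
  have hF0 : 1 ≤ F.colLen 0 := by
    rw [Nat.succ_le_iff, ← YoungDiagram.mem_iff_lt_colLen]; exact corner_mem F hF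
  have key : ∀ i j : ℕ, 0 < j → (i, j) ∈ Ec → (i, j) ∈ F := by
    intro i j hj hij
    have := hle hij
    rw [YoungDiagram.mem_sup, mem_colDia] at this
    rcases this with h | h
    · exact h
    · omega
  have h1 : Ec.colLen 1 ≤ F.colLen 1 := by
    by_contra h
    push_neg at h
    have : (F.colLen 1, 1) ∈ Ec := YoungDiagram.mem_iff_lt_colLen.mpr h
    have := key _ 1 one_pos this
    rw [YoungDiagram.mem_iff_lt_colLen] at this
    omega
  rw [← YoungDiagram.cells_subset_iff]
  rintro ⟨i, j⟩ hij
  rw [YoungDiagram.mem_cells] at hij ⊢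
  rcases Nat.eq_zero_or_pos j with rfl | hj
  · rw [YoungDiagram.mem_iff_lt_colLen] at hij ⊢
    have h0 := hc.1
    have h2 : E.colLen 1 = Ec.colLen 1 := (hc.2 1 one_pos).symm
    have h3 : F.colLen 1 ≤ F.colLen 0 := F.colLen_anti 0 1 (Nat.zero_le 1)
    omega
  · exact key i j hj hij

/-- For a finite set `S` of (nonempty) Young diagrams, `ucl(Ŝ)` is closed: a nonempty
diagram `F` belongs to it iff every diagram `G > F` belongs to it. -/
theorem ucl_shat_closed (S : Finset YoungDiagram) (hS : ∀ D ∈ S, D ≠ ⊥) :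
    ∀ F : YoungDiagram, F ≠ ⊥ →
      (F ∈ ucl (shat S) ↔ ∀ G : YoungDiagram, F < G → G ∈ ucl (shat S)) := by
  intro F hF
  constructor
  · rintro ⟨H, hH, hHF⟩ G hG
    exact ⟨H, hH, hHF.trans hG.le⟩
  · intro h
    -- first: a row-extended diagram
    have hG1 : F < F ⊔ rowDia (F.rowLen 0 + 1) := by
      refine lt_of_le_of_ne le_sup_left (fun he => ?_)
      have : (0, F.rowLen 0) ∈ F ⊔ rowDia (F.rowLen 0 + 1) :=
        YoungDiagram.mem_sup.mpr (Or.inr (mem_rowDia.mpr ⟨rfl, Nat.lt_succ_self _⟩))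
      rw [← he, YoungDiagram.mem_iff_lt_rowLen] at this
      omega
    have hG2 : F < F ⊔ colDia (F.colLen 0 + 1) := by
      refine lt_of_le_of_ne le_sup_left (fun he => ?_)
      have : (F.colLen 0, 0) ∈ F ⊔ colDia (F.colLen 0 + 1) :=
        YoungDiagram.mem_sup.mpr (Or.inr (mem_colDia.mpr ⟨Nat.lt_succ_self _, rfl⟩))
      rw [← he, YoungDiagram.mem_iff_lt_colLen] at this
      omega
    obtain ⟨H1, ⟨D, hD, E, hE, Dr, Ec, hr, hc, rfl⟩, hle1⟩ := h _ hG1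
    obtain ⟨H2, ⟨D', hD', E', hE', Dr', Ec', hr', hc', rfl⟩, hle2⟩ := h _ hG2
    refine ⟨Dr ⊔ Ec', ⟨D, hD, E', hE', Dr, Ec', hr, hc', rfl⟩, ?_⟩
    exact sup_le (shortRow_le hF hr (le_sup_left.trans hle1))
      (shortCol_le hF hc' (le_sup_right.trans hle2))
end

section
/- For any finite set S of Young diagrams, the upward closure ucl(Ŝ) of Ŝ = {(D)_r ∪ (E)_c : D, E ∈ S} is the smallest closed set containing S: it contains S, it is closed, and it is contained in every closed set of diagrams containing S. -/
/-- A set `U` of Young diagrams is closed if a nonempty diagram belongs to `U`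
iff all of its strict extensions do. -/
def ClosedSet (U : Set YoungDiagram) : Prop :=
  ∀ F : YoungDiagram, F ≠ ⊥ → (F ∈ U ↔ ∀ G : YoungDiagram, F < G → G ∈ U)

open YoungDiagram

/- ### Auxiliary lemmas -/

lemma yd_le_def {μ ν : YoungDiagram} : μ ≤ ν ↔ ∀ c : ℕ × ℕ, c ∈ μ → c ∈ ν := by
  constructor
  · intro h c hc
    exact cells_subset_iff.mpr h (mem_cells c |>.mpr hc)
  · intro h
    exact cells_subset_iff.mp (fun c hc => h c hc)

lemma yd_rowLen_le_of_le {μ ν : YoungDiagram} (h : μ ≤ ν) (i : ℕ) :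
    μ.rowLen i ≤ ν.rowLen i := by
  rcases Nat.eq_zero_or_pos (μ.rowLen i) with h0 | h0
  · omega
  · have hm : (i, μ.rowLen i - 1) ∈ μ := mem_iff_lt_rowLen.mpr (by omega)
    have := mem_iff_lt_rowLen.mp (yd_le_def.mp h _ hm)
    omega

lemma yd_le_iff_rowLen {μ ν : YoungDiagram} :
    μ ≤ ν ↔ ∀ i, μ.rowLen i ≤ ν.rowLen i := by
  constructor
  · intro h i; exact yd_rowLen_le_of_le h i
  · intro h
    rw [yd_le_def]
    rintro ⟨i, j⟩ hc
    rw [mem_iff_lt_rowLen] at hc ⊢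
    exact lt_of_lt_of_le hc (h i)

lemma yd_colLen_le_of_le {μ ν : YoungDiagram} (h : μ ≤ ν) (j : ℕ) :
    μ.colLen j ≤ ν.colLen j := by
  rw [← rowLen_transpose, ← rowLen_transpose]
  exact yd_rowLen_le_of_le (YoungDiagram.transpose_mono h) j

lemma yd_le_iff_colLen {μ ν : YoungDiagram} :
    μ ≤ ν ↔ ∀ j, μ.colLen j ≤ ν.colLen j := by
  rw [← transpose_le_iff, yd_le_iff_rowLen]
  simp [rowLen_transpose]

lemma yd_rowLen_eq_of {μ : YoungDiagram} {i m : ℕ}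
    (h : ∀ k, (i, k) ∈ μ ↔ k < m) : μ.rowLen i = m := by
  have h2 : ∀ k, k < μ.rowLen i ↔ k < m := by
    intro k; rw [← mem_iff_lt_rowLen]; exact h k
  have ha : ¬ (μ.rowLen i < m) := by rw [← h2]; exact lt_irrefl _
  have hb : ¬ (m < μ.rowLen i) := by rw [h2]; exact lt_irrefl _
  omega

lemma yd_ne_bot_iff {μ : YoungDiagram} : μ ≠ ⊥ ↔ (0, 0) ∈ μ := by
  constructor
  · intro h
    by_contra h0
    apply h
    apply SetLike.ext
    intro c
    simp only [YoungDiagram.notMem_bot, iff_false]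
    intro hc
    exact h0 (μ.up_left_mem (Nat.zero_le _) (Nat.zero_le _) (by exact hc))
  · intro h0 hbot
    rw [hbot] at h0
    exact YoungDiagram.notMem_bot _ h0

lemma yd_one_le_rowLen {μ : YoungDiagram} (h : μ ≠ ⊥) : 1 ≤ μ.rowLen 0 :=
  mem_iff_lt_rowLen.mp (yd_ne_bot_iff.mp h)

lemma yd_one_le_colLen {μ : YoungDiagram} (h : μ ≠ ⊥) : 1 ≤ μ.colLen 0 :=
  mem_iff_lt_colLen.mp (yd_ne_bot_iff.mp h)

lemma yd_transpose_lt {μ ν : YoungDiagram} (h : μ < ν) : μ.transpose < ν.transpose := by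
  rw [lt_iff_le_and_ne] at h ⊢
  exact ⟨YoungDiagram.transpose_mono h.1, fun he => h.2 (transpose_eq_iff.mp he)⟩

lemma yd_card_le (μ : YoungDiagram) : μ.cells.card ≤ μ.colLen 0 * μ.rowLen 0 := by
  have hsub : μ.cells ⊆ Finset.range (μ.colLen 0) ×ˢ Finset.range (μ.rowLen 0) := by
    rintro ⟨i, j⟩ hc
    rw [mem_cells] at hc
    rw [Finset.mem_product, Finset.mem_range, Finset.mem_range]
    constructor
    · exact lt_of_lt_of_le (mem_iff_lt_colLen.mp hc) (μ.colLen_anti 0 j (Nat.zero_le _))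
    · exact lt_of_lt_of_le (mem_iff_lt_rowLen.mp hc) (μ.rowLen_anti 0 i (Nat.zero_le _))
  calc μ.cells.card ≤ _ := Finset.card_le_card hsub
    _ = μ.colLen 0 * μ.rowLen 0 := by
        rw [Finset.card_product, Finset.card_range, Finset.card_range]

/- ### Shortening constructions -/

/-- shorten the first row -/
def shortRow (D : YoungDiagram) : YoungDiagram where
  cells := (D.cells.filter fun c => 0 < c.1) ∪
    (Finset.range (max (D.rowLen 1) 1)).image fun j => (0, j)
  isLowerSet := by
    rintro ⟨i, j⟩ ⟨a, b⟩ hab hmem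
    obtain ⟨hle1, hle2⟩ := Prod.mk_le_mk.mp hab
    simp only [Finset.coe_union, Finset.coe_filter, Finset.coe_image, Finset.coe_range,
      Set.mem_union, Set.mem_setOf_eq, Set.mem_image, Set.mem_Iio, mem_cells,
      Prod.mk.injEq] at hmem ⊢
    rcases hmem with ⟨hD, hpos⟩ | ⟨k, hk, hk1, hk2⟩
    · rcases Nat.eq_zero_or_pos a with ha | ha
      · refine Or.inr ⟨b, ?_, ha.symm, rfl⟩
        have hbj : (i, b) ∈ D := D.up_left_mem le_rfl hle2 hD
        have h1b : (1, b) ∈ D := D.up_left_mem hpos le_rfl hbj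
        have := mem_iff_lt_rowLen.mp h1b
        omega
      · exact Or.inl ⟨D.up_left_mem hle1 hle2 hD, ha⟩
    · subst hk1; subst hk2
      exact Or.inr ⟨b, by omega, by omega, rfl⟩

lemma mem_shortRow {D : YoungDiagram} {i j : ℕ} :
    (i, j) ∈ shortRow D ↔ (0 < i ∧ (i, j) ∈ D) ∨ (i = 0 ∧ j < max (D.rowLen 1) 1) := by
  rw [← mem_cells]
  simp only [shortRow, mem_mk, Finset.mem_union, Finset.mem_filter, Finset.mem_image,
    Finset.mem_range, mem_cells]
  constructor
  · rintro (⟨hD, hpos⟩ | ⟨k, hk, hkeq⟩)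
    · exact Or.inl ⟨hpos, hD⟩
    · obtain ⟨h1, h2⟩ := Prod.mk.injEq .. ▸ hkeq
      exact Or.inr ⟨h1.symm, h2 ▸ hk⟩
  · rintro (⟨hpos, hD⟩ | ⟨hi, hj⟩)
    · exact Or.inl ⟨hD, hpos⟩
    · exact Or.inr ⟨j, hj, by rw [hi]⟩

lemma isShortRow_shortRow (D : YoungDiagram) : IsShortRow D (shortRow D) := by
  constructor
  · exact yd_rowLen_eq_of (fun k => by simp [mem_shortRow])
  · intro i hi
    exact yd_rowLen_eq_of (fun k => by
      rw [mem_shortRow, mem_iff_lt_rowLen]; omega)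

def shortCol (E : YoungDiagram) : YoungDiagram := (shortRow E.transpose).transpose

lemma isShortCol_shortCol (E : YoungDiagram) : IsShortCol E (shortCol E) := by
  have h := isShortRow_shortRow E.transpose
  constructor
  · rw [shortCol, colLen_transpose, h.1, rowLen_transpose]
  · intro i hi
    rw [shortCol, colLen_transpose, h.2 i hi, rowLen_transpose]

lemma isShortRow_le {D Dr F : YoungDiagram} (h : IsShortRow D Dr)
    (hrows : ∀ i, 0 < i → D.rowLen i ≤ F.rowLen i) (hF : F ≠ ⊥) : Dr ≤ F := by
  rw [yd_le_iff_rowLen]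
  intro i
  rcases Nat.eq_zero_or_pos i with rfl | hi
  · rw [h.1]
    exact max_le ((hrows 1 one_pos).trans (F.rowLen_anti 0 1 (by norm_num)))
      (yd_one_le_rowLen hF)
  · exact (h.2 i hi) ▸ hrows i hi

lemma isShortCol_le {E Ec F : YoungDiagram} (h : IsShortCol E Ec)
    (hcols : ∀ j, 0 < j → E.colLen j ≤ F.colLen j) (hF : F ≠ ⊥) : Ec ≤ F := by
  rw [yd_le_iff_colLen]
  intro j
  rcases Nat.eq_zero_or_pos j with rfl | hj
  · rw [h.1]
    exact max_le ((hcols 1 one_pos).trans (F.colLen_anti 0 1 (by norm_num)))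
      (yd_one_le_colLen hF)
  · exact (h.2 j hj) ▸ hcols j hj

/- ### Adding a cell to the first row / column -/

/-- add a cell at the end of the first row -/
def addRow (F : YoungDiagram) : YoungDiagram where
  cells := insert (0, F.rowLen 0) F.cells
  isLowerSet := by
    rintro ⟨i, j⟩ ⟨a, b⟩ hab hmem
    obtain ⟨hle1, hle2⟩ := Prod.mk_le_mk.mp hab
    simp only [Finset.coe_insert, Set.mem_insert_iff, mem_cells, Prod.mk.injEq] at hmem ⊢
    rcases hmem with ⟨hi0, hj0⟩ | hF
    · subst hi0; subst hj0
      rcases Nat.lt_or_ge b (F.rowLen 0) with hb | hb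
      · have ha : a = 0 := Nat.le_zero.mp hle1
        subst ha
        exact Or.inr (mem_iff_lt_rowLen.mpr hb)
      · exact Or.inl ⟨Nat.le_zero.mp hle1, le_antisymm hle2 hb⟩
    · exact Or.inr (F.up_left_mem hle1 hle2 hF)

lemma mem_addRow {F : YoungDiagram} {i j : ℕ} :
    (i, j) ∈ addRow F ↔ (i, j) ∈ F ∨ (i = 0 ∧ j = F.rowLen 0) := by
  rw [← mem_cells]
  simp only [addRow, mem_mk, Finset.mem_insert, mem_cells, Prod.mk.injEq]
  tauto

lemma lt_addRow (F : YoungDiagram) : F < addRow F := by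
  rw [← cells_ssubset_iff]
  apply Finset.ssubset_insert
  rw [mem_cells, mem_iff_lt_rowLen]
  omega

lemma rowLen_addRow_pos (F : YoungDiagram) {i : ℕ} (hi : 0 < i) :
    (addRow F).rowLen i = F.rowLen i :=
  yd_rowLen_eq_of (fun k => by rw [mem_addRow, mem_iff_lt_rowLen]; omega)

/-- add a cell at the end of the first column -/
def addCol (F : YoungDiagram) : YoungDiagram := (addRow F.transpose).transpose

lemma lt_addCol (F : YoungDiagram) : F < addCol F := by
  have h := yd_transpose_lt (lt_addRow F.transpose)
  rwa [transpose_transpose] at h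

lemma colLen_addCol_pos (F : YoungDiagram) {j : ℕ} (hj : 0 < j) :
    (addCol F).colLen j = F.colLen j := by
  rw [addCol, colLen_transpose, rowLen_addRow_pos _ hj, rowLen_transpose]

/- ### Main theorem -/

/-- `ucl(Ŝ)` is the smallest closed set containing the finite set `S`:
it contains `S`, it is closed, and it is contained in every closed set containing `S`. -/
theorem ucl_shat_smallest_closed (S : Finset YoungDiagram) (hS : ∀ D ∈ S, D ≠ ⊥) :
    (∀ D ∈ S, D ∈ ucl (shat S)) ∧ ClosedSet (ucl (shat S)) ∧
      ∀ U : Set YoungDiagram, ClosedSet U → (∀ D ∈ S, D ∈ U) →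
        ucl (shat S) ⊆ U := by
  refine ⟨?_, ?_, ?_⟩
  · -- S ⊆ ucl (shat S)
    intro D hD
    refine ⟨shortRow D ⊔ shortCol D,
      ⟨D, hD, D, hD, shortRow D, shortCol D, isShortRow_shortRow D, isShortCol_shortCol D,
        rfl⟩, ?_⟩
    exact sup_le
      (isShortRow_le (isShortRow_shortRow D) (fun i _ => le_rfl) (hS D hD))
      (isShortCol_le (isShortCol_shortCol D) (fun j _ => le_rfl) (hS D hD))
  · -- ucl (shat S) is closed
    intro F hF
    constructor
    · rintro ⟨W, hW, hWF⟩ G hFG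
      exact ⟨W, hW, hWF.trans hFG.le⟩
    · intro h
      obtain ⟨W1, ⟨D, hD, E, hE, Dr, Ec, hDr, hEc, rfl⟩, hle1⟩ := h (addRow F) (lt_addRow F)
      obtain ⟨W2, ⟨D', hD', E', hE', Dr', Ec', hDr', hEc', rfl⟩, hle2⟩ :=
        h (addCol F) (lt_addCol F)
      have hDrF : Dr ≤ F := by
        refine isShortRow_le hDr (fun i hi => ?_) hF
        rw [← hDr.2 i hi]
        calc Dr.rowLen i ≤ (addRow F).rowLen i :=
              yd_rowLen_le_of_le (le_sup_left.trans hle1) i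
          _ = F.rowLen i := rowLen_addRow_pos F hi
      have hEcF : Ec' ≤ F := by
        refine isShortCol_le hEc' (fun j hj => ?_) hF
        rw [← hEc'.2 j hj]
        calc Ec'.colLen j ≤ (addCol F).colLen j :=
              yd_colLen_le_of_le (le_sup_right.trans hle2) j
          _ = F.colLen j := colLen_addCol_pos F hj
      exact ⟨Dr ⊔ Ec', ⟨D, hD, E', hE', Dr, Ec', hDr, hEc', rfl⟩, sup_le hDrF hEcF⟩
  · -- minimality
    intro U hU hSU G hG
    obtain ⟨W, ⟨D, hD, E, hE, Dr, Ec, hDr, hEc, rfl⟩, hWG⟩ := hG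
    have hDbot := hS D hD
    have hEbot := hS E hE
    set R := D.rowLen 0 with hR
    set C := E.colLen 0 with hC
    have key : ∀ n : ℕ, ∀ G : YoungDiagram, Dr ≤ G → Ec ≤ G →
        (R - 1) * (C - 1) + 1 ≤ n + G.cells.card → G ∈ U := by
      intro n
      induction n with
      | zero =>
        intro G hDrG hEcG hcard
        have hcases : R ≤ G.rowLen 0 ∨ C ≤ G.colLen 0 := by
          by_contra hc
          push_neg at hc
          have h1 : G.cells.card ≤ G.colLen 0 * G.rowLen 0 := yd_card_le G
          have h2 : G.colLen 0 ≤ C - 1 := Nat.le_pred_of_lt hc.2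
          have h3 : G.rowLen 0 ≤ R - 1 := Nat.le_pred_of_lt hc.1
          have h4 := Nat.mul_le_mul h2 h3
          have h5 : (C - 1) * (R - 1) = (R - 1) * (C - 1) := Nat.mul_comm _ _
          omega
        rcases hcases with hrow | hcol
        · have hDG : D ≤ G := by
            rw [yd_le_iff_rowLen]
            intro i
            rcases Nat.eq_zero_or_pos i with rfl | hi
            · exact hrow
            · rw [← hDr.2 i hi]
              exact yd_rowLen_le_of_le hDrG i
          rcases eq_or_lt_of_le hDG with rfl | hlt
          · exact hSU D hD
          · exact ((hU D hDbot).mp (hSU D hD)) G hlt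
        · have hEG : E ≤ G := by
            rw [yd_le_iff_colLen]
            intro j
            rcases Nat.eq_zero_or_pos j with rfl | hj
            · exact hcol
            · rw [← hEc.2 j hj]
              exact yd_colLen_le_of_le hEcG j
          rcases eq_or_lt_of_le hEG with rfl | hlt
          · exact hSU E hE
          · exact ((hU E hEbot).mp (hSU E hE)) G hlt
      | succ n ih =>
        intro G hDrG hEcG hcard
        have hGbot : G ≠ ⊥ := by
          rw [yd_ne_bot_iff]
          apply yd_le_def.mp hDrG
          rw [mem_iff_lt_rowLen, hDr.1]
          omega
        rw [hU G hGbot]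
        intro G' hGG'
        apply ih G' (hDrG.trans hGG'.le) (hEcG.trans hGG'.le)
        have := Finset.card_lt_card (cells_ssubset_iff.mpr hGG')
        omega
    apply key ((R - 1) * (C - 1) + 1) G (le_sup_left.trans hWG) (le_sup_right.trans hWG)
    omega
end
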